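/- Let A be the free associative ℂ-algebra on θ¹, θ², θ³ modulo the ternary relations θⁱθʲθᵏ = q·θʲθᵏθⁱ (q = exp(2πi/3)) for all i,j,k, and the binary relation (θ¹)² + (θ²)² + (θ³)² = 0. Then the subspace spanned by degree-2 monomials θⁱθʲ has dimension 8. -/

import Mathlib

noncomputable def q : ℂ := Complex.exp (2 * Real.pi * Complex.I / 3)

/-- The defining relations of the `q`-algebra: the ternary relations
`θⁱθʲθᵏ = q·θʲθᵏθⁱ` and the binary relation `(θ¹)² + (θ²)² + (θ³)² = 0`. -/
inductive qRel : FreeAlgebra ℂ (Fin 3) → FreeAlgebra ℂ (Fin 3) → Prop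
  | ternary (i j k : Fin 3) :
      qRel (FreeAlgebra.ι ℂ i * FreeAlgebra.ι ℂ j * FreeAlgebra.ι ℂ k)
        (q • (FreeAlgebra.ι ℂ j * FreeAlgebra.ι ℂ k * FreeAlgebra.ι ℂ i))
  | binary : qRel (∑ i : Fin 3, FreeAlgebra.ι ℂ i * FreeAlgebra.ι ℂ i) 0

/-- The `q`-algebra: the free algebra on three generators modulo the relations. -/
noncomputable abbrev QAlgebra : Type := RingQuot qRel

/-- The generators of the `q`-algebra. -/
noncomputable def θ (i : Fin 3) : QAlgebra :=
  RingQuot.mkAlgHom ℂ qRel (FreeAlgebra.ι ℂ i)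

/-! ### Auxiliary model: truncated algebra as endomorphisms -/

/-- The carrier of the model: degree-0, degree-1 and degree-2 components. -/
abbrev Mod3 : Type := ℂ × (Fin 3 → ℂ) × (Fin 8 → ℂ)

/-- Coefficients of the class of `E i j` in `ℂ⁹/⟨I⟩ ≅ ℂ⁸`. -/
def cvec (i j : Fin 3) : Fin 8 → ℂ := fun m =>
  (if (m : ℕ) = 3 * (i : ℕ) + (j : ℕ) then 1 else 0) +
    (if i = 2 ∧ j = 2 ∧ ((m : ℕ) = 0 ∨ (m : ℕ) = 4) then -1 else 0)

/-- The action of the `i`-th generator on the model. -/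
noncomputable def xmap (i : Fin 3) : Mod3 →ₗ[ℂ] Mod3 where
  toFun p := (0, Pi.single i p.1, ∑ j : Fin 3, p.2.1 j • cvec i j)
  map_add' p p' := by
    refine Prod.ext (by simp) (Prod.ext ?_ ?_)
    · funext a; simp [Pi.single_apply]; split <;> simp
    · simp [add_smul, Finset.sum_add_distrib]
  map_smul' r p := by
    refine Prod.ext (by simp) (Prod.ext ?_ ?_)
    · funext a; by_cases h : a = i <;> simp [Pi.single_apply, h]
    · simp [smul_smul, Finset.smul_sum]

lemma csum : ∑ i : Fin 3, cvec i i = 0 := by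
  funext m
  fin_cases m <;>
    simp only [Fin.sum_univ_three, Pi.add_apply, Pi.zero_apply, cvec, Fin.isValue] <;>
    norm_num [Fin.ext_iff]

lemma xmap_triple (i j k : Fin 3) :
    (xmap i * xmap j * xmap k : Module.End ℂ Mod3) = 0 := by
  refine LinearMap.ext fun p => ?_
  simp [Module.End.mul_apply, xmap]

lemma xmap_binary : ∑ i : Fin 3, (xmap i * xmap i : Module.End ℂ Mod3) = 0 := by
  refine LinearMap.ext fun p => ?_
  have h : ∀ i : Fin 3, (xmap i * xmap i : Module.End ℂ Mod3) p = (0, 0, p.1 • cvec i i) := by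
    intro i
    simp [Module.End.mul_apply, xmap, Pi.single_apply, ite_smul, Finset.sum_ite_eq']
  simp only [LinearMap.sum_apply, h, LinearMap.zero_apply]
  have : ∑ i : Fin 3, ((0, 0, p.1 • cvec i i) : Mod3)
      = ((0, 0, p.1 • ∑ i : Fin 3, cvec i i) : Mod3) := by
    simp [Prod.ext_iff, Prod.fst_sum, Prod.snd_sum, Finset.smul_sum]
  rw [this, csum, smul_zero]
  rfl

/-- The representation of the free algebra on the model. -/
noncomputable def φ : FreeAlgebra ℂ (Fin 3) →ₐ[ℂ] Module.End ℂ Mod3 :=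
  FreeAlgebra.lift ℂ xmap

lemma φ_rel : ∀ ⦃a b⦄, qRel a b → φ a = φ b := by
  intro a b r
  induction r with
  | ternary i j k =>
      simp only [map_mul, map_smul, FreeAlgebra.lift_ι_apply, φ]
      rw [xmap_triple i j k, xmap_triple j k i, smul_zero]
  | binary =>
      simpa only [map_sum, map_mul, map_zero, FreeAlgebra.lift_ι_apply, φ] using xmap_binary

/-- The induced representation of the `q`-algebra. -/
noncomputable def Φ : QAlgebra →ₐ[ℂ] Module.End ℂ Mod3 :=
  RingQuot.liftAlgHom ℂ ⟨φ, φ_rel⟩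

/-- Evaluation at `(1,0,0)`, projected to the degree-2 component. -/
noncomputable def πmap : Module.End ℂ Mod3 →ₗ[ℂ] (Fin 8 → ℂ) where
  toFun f := (f (1, 0, 0)).2.2
  map_add' f g := rfl
  map_smul' r f := rfl

/-- The composite linear map `QAlgebra →ₗ ℂ⁸`. -/
noncomputable def π : QAlgebra →ₗ[ℂ] (Fin 8 → ℂ) :=
  πmap ∘ₗ Φ.toLinearMap

lemma π_apply (i j : Fin 3) : π (θ i * θ j) = cvec i j := by
  have h1 : θ i * θ j = RingQuot.mkAlgHom ℂ qRel (FreeAlgebra.ι ℂ i * FreeAlgebra.ι ℂ j) := by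
    rw [map_mul]; rfl
  rw [π, LinearMap.comp_apply, AlgHom.toLinearMap_apply, h1, Φ,
    RingQuot.liftAlgHom_mkAlgHom_apply]
  simp [φ, πmap, Module.End.mul_apply, xmap, Pi.single_apply, ite_smul, Finset.sum_ite_eq']

/-- A list of 8 degree-2 monomials. -/
noncomputable def v : Fin 8 → QAlgebra :=
  ![θ 0 * θ 0, θ 0 * θ 1, θ 0 * θ 2, θ 1 * θ 0, θ 1 * θ 1, θ 1 * θ 2, θ 2 * θ 0, θ 2 * θ 1]

def p1 : Fin 8 → Fin 3 := ![0, 0, 0, 1, 1, 1, 2, 2]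
def p2 : Fin 8 → Fin 3 := ![0, 1, 2, 0, 1, 2, 0, 1]

lemma cvec_p (m : Fin 8) :
    cvec (p1 m) (p2 m) = fun j => if m = j then (1 : ℂ) else 0 := by
  fin_cases m <;> funext j <;> fin_cases j <;> norm_num [cvec, p1, p2, Fin.ext_iff]

lemma sum_sq : θ 0 * θ 0 + θ 1 * θ 1 + θ 2 * θ 2 = 0 := by
  have h := RingQuot.mkAlgHom_rel ℂ qRel.binary
  simp only [map_sum, map_mul, map_zero, Fin.sum_univ_three] at h
  simpa [θ] using h

theorem stmt18 :
    Module.finrank ℂ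
      (Submodule.span ℂ {x : QAlgebra | ∃ i j : Fin 3, x = θ i * θ j}) = 8 := by
  set S : Set QAlgebra := {x : QAlgebra | ∃ i j : Fin 3, x = θ i * θ j} with hS
  have hSfin : S.Finite := by
    have : S ⊆ Set.range (fun p : Fin 3 × Fin 3 => θ p.1 * θ p.2) := by
      rintro x ⟨i, j, rfl⟩; exact ⟨(i, j), rfl⟩
    exact (Set.finite_range _).subset this
  haveI : FiniteDimensional ℂ (Submodule.span ℂ S) :=
    FiniteDimensional.span_of_finite ℂ hSfin
  apply le_antisymm
  · -- upper bound : span S = span (range v)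
    have hspan : Submodule.span ℂ S = Submodule.span ℂ (Set.range v) := by
      apply le_antisymm
      · rw [Submodule.span_le]
        rintro x ⟨i, j, rfl⟩
        have h22 : θ 2 * θ 2 = -(θ 0 * θ 0 + θ 1 * θ 1) := by
          have := sum_sq
          rw [add_assoc] at this  -- not needed maybe
          linear_combination (norm := noncomm_ring) sum_sq
        fin_cases i <;> fin_cases j
        · exact Submodule.subset_span ⟨0, rfl⟩
        · exact Submodule.subset_span ⟨1, rfl⟩
        · exact Submodule.subset_span ⟨2, rfl⟩
        · exact Submodule.subset_span ⟨3, rfl⟩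
        · exact Submodule.subset_span ⟨4, rfl⟩
        · exact Submodule.subset_span ⟨5, rfl⟩
        · exact Submodule.subset_span ⟨6, rfl⟩
        · exact Submodule.subset_span ⟨7, rfl⟩
        · show θ 2 * θ 2 ∈ (Submodule.span ℂ (Set.range v) : Set QAlgebra)
          rw [h22]
          exact neg_mem (add_mem (Submodule.subset_span ⟨0, rfl⟩)
            (Submodule.subset_span ⟨4, rfl⟩))
      · rw [Submodule.span_le]
        rintro x ⟨m, rfl⟩
        fin_cases m <;> exact Submodule.subset_span ⟨_, _, rfl⟩
    rw [hspan]
    simpa [Set.finrank] using finrank_range_le_card v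
  · -- lower bound via the representation π
    have hmap : Submodule.map π (Submodule.span ℂ S) = ⊤ := by
      rw [eq_top_iff]
      rintro w -
      rw [pi_eq_sum_univ w]
      refine Submodule.sum_mem _ fun m _ => Submodule.smul_mem _ _ ?_
      refine Submodule.mem_map.mpr ⟨θ (p1 m) * θ (p2 m),
        Submodule.subset_span ⟨p1 m, p2 m, rfl⟩, ?_⟩
      rw [π_apply, cvec_p]
    calc (8 : ℕ) = Module.finrank ℂ (⊤ : Submodule ℂ (Fin 8 → ℂ)) := by
          simp [Module.finrank_fin_fun]
      _ = Module.finrank ℂ (Submodule.map π (Submodule.span ℂ S)) := by rw [hmap]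
      _ ≤ Module.finrank ℂ (Submodule.span ℂ S) :=
          Submodule.finrank_map_le π (Submodule.span ℂ S)
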